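/- Let F_q have characteristic p, let g ∈ F_q[X] be monic irreducible of degree n and order e (g(0) ≠ 0), let t = (q^n − 1)/e, and let 1 ≤ r ≤ b. Let S_r be the set of sequences in Ω(g^b) whose minimal polynomial is exactly g^r, and let c be the least nonnegative integer with p^c ≥ r. Then: every sequence in S_r has least period e·p^c; the cardinality of S_r is q^{nr} − q^{n(r−1)}; and S_r is the disjoint union of exactly (q^{nr} − q^{n(r−1)})/(e·p^c) = t·q^{n(r−1)}/p^c shift-equivalence classes, each containing e·p^c sequences. -/

import Mathlib

open Polynomial

/-- The (left) shift operator `L` on sequences over `F`, as an `F`-linear endomorphism. -/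
def shiftL (F : Type*) [CommSemiring F] : Module.End F (ℕ → F) where
  toFun s := fun i => s (i + 1)
  map_add' _ _ := rfl
  map_smul' _ _ := rfl

/-- For a polynomial `f`, the operator `f(L)` on sequences. -/
noncomputable def polyL {F : Type*} [CommSemiring F] (f : Polynomial F) :
    Module.End F (ℕ → F) :=
  Polynomial.aeval (shiftL F) f

/-- `Ω(f)`: the set of sequences annihilated by `f(L)`. -/
def OmegaSet {F : Type*} [CommSemiring F] (f : Polynomial F) : Set (ℕ → F) :=
  {s | polyL f s = 0}

/-- Two sequences are shift equivalent if one is a shift of the other. -/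
def ShiftEquiv {F : Type*} [CommSemiring F] (s s' : ℕ → F) : Prop :=
  ∃ ℓ : ℕ, s' = (shiftL F ^ ℓ) s

/-- The cycle (shift-equivalence class) of a sequence. -/
def seqCycle {F : Type*} [CommSemiring F] (s : ℕ → F) : Set (ℕ → F) :=
  {s' | ∃ ℓ : ℕ, s' = (shiftL F ^ ℓ) s}

/-- `N` is the least period of the sequence `s`. -/
def IsLeastPeriod {F : Type*} (s : ℕ → F) (N : ℕ) : Prop :=
  0 < N ∧ (∀ i, s (i + N) = s i) ∧ ∀ M : ℕ, 0 < M → (∀ i, s (i + M) = s i) → N ≤ M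

/-- `h` is the minimal polynomial of the sequence `s`: it is monic, annihilates `s`,
and divides every polynomial annihilating `s`. -/
def IsMinPolyOfSeq {F : Type*} [CommSemiring F] (s : ℕ → F) (h : Polynomial F) : Prop :=
  h.Monic ∧ polyL h s = 0 ∧ ∀ h' : Polynomial F, polyL h' s = 0 → h ∣ h'

/-- `e = ord(f)`: the least `N ≥ 1` with `f ∣ X^N - 1`. -/
def IsOrderOf {F : Type*} [CommRing F] (f : Polynomial F) (e : ℕ) : Prop :=
  0 < e ∧ f ∣ X ^ e - 1 ∧ ∀ N : ℕ, 0 < N → f ∣ X ^ N - 1 → e ≤ N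

section Basic
variable {F : Type*} [Field F]

lemma shiftL_pow_apply (s : ℕ → F) (k i : ℕ) : (shiftL F ^ k) s i = s (i + k) := by
  induction k generalizing i with
  | zero => rfl
  | succ k ih =>
    rw [pow_succ', Module.End.mul_apply]
    show ((shiftL F ^ k) s) (i + 1) = _
    rw [ih]; congr 1; omega

lemma polyL_mul_apply (f g : Polynomial F) (s : ℕ → F) :
    polyL (f * g) s = polyL f (polyL g s) := by
  unfold polyL; rw [map_mul, Module.End.mul_apply]

lemma polyL_add_apply (f g : Polynomial F) (s : ℕ → F) :
    polyL (f + g) s = polyL f s + polyL g s := by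
  unfold polyL; rw [map_add]; rfl

lemma polyL_comm (f g : Polynomial F) (s : ℕ → F) :
    polyL f (polyL g s) = polyL g (polyL f s) := by
  rw [← polyL_mul_apply, mul_comm, polyL_mul_apply]

lemma polyL_X_pow (k : ℕ) : polyL (X ^ k : Polynomial F) = shiftL F ^ k := by
  unfold polyL; rw [map_pow, aeval_X]

lemma polyL_X_pow_sub_one_apply (N : ℕ) (s : ℕ → F) (i : ℕ) :
    polyL (X ^ N - 1 : Polynomial F) s i = s (i + N) - s i := by
  unfold polyL
  rw [map_sub, map_one, LinearMap.sub_apply, map_pow, aeval_X]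
  show (shiftL F ^ N) s i - (1 : Module.End F (ℕ → F)) s i = _
  rw [shiftL_pow_apply]; rfl

lemma period_iff (N : ℕ) (s : ℕ → F) :
    polyL (X ^ N - 1 : Polynomial F) s = 0 ↔ ∀ i, s (i + N) = s i := by
  constructor
  · intro h i
    have := congrFun h i
    rw [polyL_X_pow_sub_one_apply] at this
    simpa [sub_eq_zero] using this
  · intro h
    funext i
    rw [polyL_X_pow_sub_one_apply, h i]; simp

lemma polyL_annihilates_of_dvd {f h : Polynomial F} (hd : h ∣ f) {s : ℕ → F}
    (hs : polyL h s = 0) : polyL f s = 0 := by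
  obtain ⟨u, rfl⟩ := hd
  rw [mul_comm, polyL_mul_apply, hs, map_zero]

lemma polyL_shift (f : Polynomial F) (s : ℕ → F) (ℓ : ℕ) :
    polyL f ((shiftL F ^ ℓ) s) = (shiftL F ^ ℓ) (polyL f s) := by
  rw [← polyL_X_pow, polyL_comm, polyL_X_pow]

end Basic

section Count
variable {F : Type*} [Field F]

lemma polyL_apply_eq_sum (f : Polynomial F) (s : ℕ → F) (i : ℕ) :
    polyL f s i = ∑ j ∈ Finset.range (f.natDegree + 1), f.coeff j * s (i + j) := by
  unfold polyL
  rw [aeval_eq_sum_range, LinearMap.sum_apply, Finset.sum_apply]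
  refine Finset.sum_congr rfl fun j hj => ?_
  rw [LinearMap.smul_apply]
  show f.coeff j * ((shiftL F ^ j) s i) = _
  rw [shiftL_pow_apply]

noncomputable def lfsrSeq (f : Polynomial F) (v : ℕ → F) : ℕ → F
  | i =>
    if h : i < f.natDegree then v i
    else - ∑ j : Fin f.natDegree, f.coeff j * lfsrSeq f v (i - f.natDegree + j)
  decreasing_by have := j.isLt; omega

lemma lfsrSeq_lt (f : Polynomial F) (v : ℕ → F) {i : ℕ} (h : i < f.natDegree) :
    lfsrSeq f v i = v i := by
  rw [lfsrSeq]; simp [h]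

lemma lfsrSeq_ge (f : Polynomial F) (v : ℕ → F) {i : ℕ} (h : f.natDegree ≤ i) :
    lfsrSeq f v i
      = - ∑ j : Fin f.natDegree, f.coeff j * lfsrSeq f v (i - f.natDegree + j) := by
  rw [lfsrSeq]; simp [Nat.not_lt.mpr h]

lemma lfsrSeq_mem (f : Polynomial F) (hf : f.Monic) (v : ℕ → F) :
    polyL f (lfsrSeq f v) = 0 := by
  funext i
  rw [polyL_apply_eq_sum, Finset.sum_range_succ]
  have hd : f.natDegree ≤ i + f.natDegree := by omega
  rw [hf.coeff_natDegree, one_mul, lfsrSeq_ge f v hd]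
  have : i + f.natDegree - f.natDegree = i := by omega
  rw [this]
  rw [← Fin.sum_univ_eq_sum_range (fun j => f.coeff j * lfsrSeq f v (i + j)) f.natDegree]
  show _ + - _ = (0 : ℕ → F) i
  simp

lemma omega_ext {f : Polynomial F} (hf : f.Monic) {s s' : ℕ → F}
    (hs : polyL f s = 0) (hs' : polyL f s' = 0)
    (h : ∀ i < f.natDegree, s i = s' i) : s = s' := by
  funext i
  induction i using Nat.strong_induction_on with
  | _ i ih =>
    by_cases hi : i < f.natDegree
    · exact h i hi
    · have key : ∀ u : ℕ → F, polyL f u = 0 →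
          u i = - ∑ j ∈ Finset.range f.natDegree, f.coeff j * u (i - f.natDegree + j) := by
        intro u hu
        have := congrFun hu (i - f.natDegree)
        rw [polyL_apply_eq_sum, Finset.sum_range_succ, hf.coeff_natDegree, one_mul] at this
        have h1 : i - f.natDegree + f.natDegree = i := by omega
        rw [h1] at this
        have h2 : (0 : ℕ → F) (i - f.natDegree) = 0 := rfl
        rw [h2] at this
        linear_combination this
      rw [key s hs, key s' hs']
      congr 1
      refine Finset.sum_congr rfl fun j hj => ?_
      rw [Finset.mem_range] at hj
      rw [ih (i - f.natDegree + j) (by omega)]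

noncomputable def omegaEquiv (f : Polynomial F) (hf : f.Monic) :
    OmegaSet f ≃ (Fin f.natDegree → F) where
  toFun s := fun j => s.1 j
  invFun v := ⟨lfsrSeq f (fun i => if h : i < f.natDegree then v ⟨i, h⟩ else 0),
    lfsrSeq_mem f hf _⟩
  left_inv s := by
    ext i
    show lfsrSeq f _ i = s.1 i
    have := omega_ext hf (lfsrSeq_mem f hf (fun i => if h : i < f.natDegree then s.1 i else 0))
      s.2 (fun i hi => by rw [lfsrSeq_lt _ _ hi]; simp [hi])
    exact congrFun this i
  right_inv v := by
    funext j
    show lfsrSeq f _ j = v j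
    rw [lfsrSeq_lt _ _ j.isLt]
    simp

lemma omega_finite (f : Polynomial F) (hf : f.Monic) [Fintype F] : (OmegaSet f).Finite := by
  rw [← Set.finite_coe_iff]
  exact Finite.of_equiv _ (omegaEquiv f hf).symm

lemma omega_ncard (f : Polynomial F) (hf : f.Monic) [Fintype F] :
    (OmegaSet f).ncard = Fintype.card F ^ f.natDegree := by
  rw [← Nat.card_coe_set_eq, Nat.card_congr (omegaEquiv f hf),
    Nat.card_eq_fintype_card, Fintype.card_fun, Fintype.card_fin]

end Count

section Order
variable {F : Type*} [Field F]

lemma dvd_X_pow_sub_one_mod {f : Polynomial F} {a : ℕ} (ha : f ∣ X ^ a - 1) :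
    ∀ b : ℕ, f ∣ X ^ b - 1 → f ∣ X ^ (b % a) - 1 := by
  intro b
  induction b using Nat.strong_induction_on with
  | _ b ih =>
    intro hb
    rcases Nat.lt_or_ge b a with h | h
    · rwa [Nat.mod_eq_of_lt h]
    · rcases Nat.eq_zero_or_pos a with rfl | ha0
      · simpa using hb
      have hx : (X : Polynomial F) ^ (b - a) * X ^ a = X ^ b := by
        rw [← pow_add]; congr 1; omega
      have key : (X : Polynomial F) ^ (b - a) - 1
          = (X ^ b - 1) - X ^ (b - a) * (X ^ a - 1) := by
        rw [mul_sub, hx]; ring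
      have h1 : f ∣ (X : Polynomial F) ^ (b - a) - 1 := by
        rw [key]; exact dvd_sub hb (ha.mul_left _)
      rw [Nat.mod_eq_sub_mod h]
      exact ih (b - a) (by omega) h1

lemma order_dvd {f : Polynomial F} {e : ℕ} (he : IsOrderOf f e) {N : ℕ}
    (hN : f ∣ X ^ N - 1) : e ∣ N := by
  obtain ⟨he0, hee, hmin⟩ := he
  have hmod := dvd_X_pow_sub_one_mod hee N hN
  by_contra h
  have h1 : 0 < N % e := Nat.pos_of_ne_zero fun h0 => h (Nat.dvd_of_mod_eq_zero h0)
  have h2 := hmin _ h1 hmod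
  have := Nat.mod_lt N he0
  omega

lemma p_not_dvd_order {p : ℕ} (hp : p.Prime) [CharP F p] {g : Polynomial F}
    (hirr : Irreducible g) {e : ℕ} (he : IsOrderOf g e) : ¬ p ∣ e := by
  haveI : Fact p.Prime := ⟨hp⟩
  rintro ⟨k, rfl⟩
  obtain ⟨he0, hee, hmin⟩ := he
  have hpow : (X : Polynomial F) ^ (p * k) - 1 = (X ^ k - 1) ^ p := by
    rw [sub_pow_char, one_pow, ← pow_mul, mul_comm]
  rw [hpow] at hee
  have hdvd : g ∣ X ^ k - 1 := hirr.prime.dvd_of_dvd_pow hee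
  have hk0 : 0 < k := Nat.pos_of_ne_zero fun h => by subst h; simp at he0
  have := hmin k hk0 hdvd
  nlinarith [hp.two_le]

lemma squarefree_X_pow_sub_one {p : ℕ} (hp : p.Prime) [CharP F p] {N : ℕ} (hN : ¬ p ∣ N) :
    Squarefree ((X : Polynomial F) ^ N - 1) := by
  apply (Polynomial.X_pow_sub_one_separable_iff.mpr ?_).squarefree
  rw [Ne, CharP.cast_eq_zero_iff F p]; exact hN

lemma X_pow_sub_one_dvd {a b : ℕ} (h : a ∣ b) :
    (X : Polynomial F) ^ a - 1 ∣ X ^ b - 1 := by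
  obtain ⟨k, rfl⟩ := h
  have : (X : Polynomial F) ^ (a * k) - 1 = ((X ^ a) ^ k - 1 ^ k) := by
    rw [← pow_mul, one_pow]
  rw [this]
  exact sub_dvd_pow_sub_pow _ _ _

lemma order_pow {p : ℕ} (hp : p.Prime) [CharP F p] {g : Polynomial F}
    (hirr : Irreducible g) {e : ℕ} (he : IsOrderOf g e)
    {r c : ℕ} (hr1 : 1 ≤ r) (hc1 : r ≤ p ^ c) (hc2 : ∀ c' : ℕ, r ≤ p ^ c' → c ≤ c') :
    IsOrderOf (g ^ r) (e * p ^ c) := by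
  haveI : Fact p.Prime := ⟨hp⟩
  obtain ⟨he0, hee, hmin⟩ := he
  have hpe : ¬ p ∣ e := p_not_dvd_order hp hirr ⟨he0, hee, hmin⟩
  have hg0 : g ≠ 0 := hirr.ne_zero
  refine ⟨Nat.mul_pos he0 (pow_pos hp.pos c), ?_, ?_⟩
  · have h1 : g ^ r ∣ (X ^ e - 1 : Polynomial F) ^ (p ^ c) :=
      (pow_dvd_pow_of_dvd hee r).trans (pow_dvd_pow _ hc1)
    have h2 : ((X : Polynomial F) ^ e - 1) ^ (p ^ c) = X ^ (e * p ^ c) - 1 := by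
      rw [sub_pow_char_pow, one_pow, ← pow_mul]
    rwa [h2] at h1
  · intro N hN0 hN
    have hgN : g ∣ X ^ N - 1 := (dvd_pow_self g (by omega)).trans hN
    obtain ⟨k, rfl⟩ := order_dvd ⟨he0, hee, hmin⟩ hgN
    have hk0 : 0 < k := Nat.pos_of_ne_zero fun h => by subst h; simp at hN0
    obtain ⟨j, u, hpu, hku⟩ := Nat.exists_eq_pow_mul_and_not_dvd (by omega : k ≠ 0) p hp.one_lt.ne'
    have hWsq : Squarefree ((X : Polynomial F) ^ (e * u) - 1) := by
      refine squarefree_X_pow_sub_one hp ?_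
      rw [hp.dvd_mul]
      tauto
    have hgW : g ∣ (X : Polynomial F) ^ (e * u) - 1 :=
      hee.trans (X_pow_sub_one_dvd ⟨u, rfl⟩)
    obtain ⟨v, hv⟩ := hgW
    have hgv : ¬ g ∣ v := by
      intro hd
      obtain ⟨w, hw⟩ := hd
      have : g * g ∣ (X : Polynomial F) ^ (e * u) - 1 := ⟨w, by rw [hv, hw]; ring⟩
      exact hirr.not_isUnit (hWsq g this)
    have hsplit : (X : Polynomial F) ^ (e * k) - 1 = ((X : Polynomial F) ^ (e * u) - 1) ^ (p ^ j) := by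
      rw [sub_pow_char_pow, one_pow, ← pow_mul]
      congr 2
      rw [hku]; ring
    rw [hsplit, hv, mul_pow] at hN
    have hrj : r ≤ p ^ j := by
      by_contra hlt
      push_neg at hlt
      have h3 : g ^ (p ^ j) * g ∣ g ^ (p ^ j) * v ^ (p ^ j) := by
        have : g ^ (p ^ j + 1) ∣ g ^ r := pow_dvd_pow g (by omega)
        calc g ^ (p ^ j) * g = g ^ (p ^ j + 1) := by ring
        _ ∣ g ^ r := this
        _ ∣ _ := hN
      have := (mul_dvd_mul_iff_left (pow_ne_zero (p ^ j) hg0)).mp h3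
      exact hgv (hirr.prime.dvd_of_dvd_pow this)
    have hcj : c ≤ j := hc2 j hrj
    have hpk : p ^ j ≤ k := by
      have hu1 : 1 ≤ u := Nat.pos_of_ne_zero fun h => by subst h; simp at hku; omega
      calc p ^ j ≤ p ^ j * u := Nat.le_mul_of_pos_right _ hu1
        _ = k := hku.symm
    calc e * p ^ c ≤ e * p ^ j := by
          exact Nat.mul_le_mul_left e (Nat.pow_le_pow_right hp.pos hcj)
      _ ≤ e * k := Nat.mul_le_mul_left e hpk
end Order

section CardDvd
variable {F : Type*} [Field F] [Fintype F]

lemma order_dvd_card_sub_one {g : Polynomial F} (hmonic : g.Monic) (hirr : Irreducible g)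
    (hg0 : g.coeff 0 ≠ 0) {e : ℕ} (he : IsOrderOf g e) :
    e ∣ Fintype.card F ^ g.natDegree - 1 := by
  haveI : Fact (Irreducible g) := ⟨hirr⟩
  have hgne : g ≠ 0 := hirr.ne_zero
  let K := AdjoinRoot g
  let bK : Module.Basis (Fin g.natDegree) F K := AdjoinRoot.powerBasisAux' hmonic
  letI : Fintype K := Module.fintypeOfFintype bK
  have hcard : Fintype.card K = Fintype.card F ^ g.natDegree := by
    rw [Module.card_fintype bK, Fintype.card_fin]
  set α : K := AdjoinRoot.root g with hα
  have hmin : minpoly F α = g := by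
    rw [AdjoinRoot.minpoly_root hgne, hmonic.leadingCoeff, inv_one, map_one, mul_one]
  have hαne : α ≠ 0 := by
    intro h0
    rw [h0, minpoly.zero] at hmin
    rw [← hmin] at hg0
    simp at hg0
  have hpow : α ^ (Fintype.card K - 1) = 1 := FiniteField.pow_card_sub_one_eq_one α hαne
  have hdvd : g ∣ X ^ (Fintype.card F ^ g.natDegree - 1) - 1 := by
    have h2 := minpoly.dvd F α (p := X ^ (Fintype.card F ^ g.natDegree - 1) - 1) ?_
    · rwa [hmin] at h2
    · rw [map_sub, map_pow, Polynomial.aeval_X, map_one, ← hcard, hpow, sub_self]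
  exact order_dvd he hdvd

end CardDvd

section Cycles
variable {F : Type*} [Field F]

lemma shift_pow_add (s : ℕ → F) (a b : ℕ) :
    (shiftL F ^ (a + b)) s = (shiftL F ^ a) ((shiftL F ^ b) s) := by
  rw [pow_add, Module.End.mul_apply]

lemma least_period_of_minpoly {h : Polynomial F} {N : ℕ} (hN : IsOrderOf h N)
    {s : ℕ → F} (hs : IsMinPolyOfSeq s h) : IsLeastPeriod s N := by
  obtain ⟨hN0, hNd, hNmin⟩ := hN
  obtain ⟨hm, hann, hdvd⟩ := hs
  refine ⟨hN0, ?_, ?_⟩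
  · exact (period_iff N s).mp (polyL_annihilates_of_dvd hNd hann)
  · intro M hM0 hMper
    exact hNmin M hM0 (hdvd _ ((period_iff M s).mpr hMper))

lemma g_not_dvd_X {g : Polynomial F} (hirr : Irreducible g) (hg0 : g.coeff 0 ≠ 0) :
    ¬ g ∣ (X : Polynomial F) := by
  rintro ⟨w, hw⟩
  rcases Polynomial.irreducible_X.isUnit_or_isUnit hw with h | h
  · exact hirr.not_isUnit h
  · obtain ⟨a, ha, rfl⟩ := Polynomial.isUnit_iff.mp h
    have h0 : (0 : F) = g.coeff 0 * a := by
      simpa using congrArg (fun q => Polynomial.coeff q 0) hw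
    rcases mul_eq_zero.mp h0.symm with h1 | h1
    · exact hg0 h1
    · exact ha.ne_zero h1

lemma shift_minpoly {g : Polynomial F} (hirr : Irreducible g) (hg0 : g.coeff 0 ≠ 0)
    {r : ℕ} {s : ℕ → F} (hs : IsMinPolyOfSeq s (g ^ r)) (ℓ : ℕ) :
    IsMinPolyOfSeq ((shiftL F ^ ℓ) s) (g ^ r) := by
  obtain ⟨hm, hann, hdvd⟩ := hs
  refine ⟨hm, ?_, ?_⟩
  · rw [polyL_shift, hann, map_zero]
  · intro h' hh'
    have h1 : polyL (h' * X ^ ℓ) s = 0 := by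
      rw [polyL_mul_apply, polyL_X_pow]
      exact hh'
    have h2 : g ^ r ∣ h' * X ^ ℓ := hdvd _ h1
    refine hirr.prime.pow_dvd_of_dvd_mul_right r ?_ h2
    intro hgx
    exact g_not_dvd_X hirr hg0 (hirr.prime.dvd_of_dvd_pow hgx)

variable {s : ℕ → F} {N : ℕ}

lemma shift_N_fix (hper : ∀ i, s (i + N) = s i) : (shiftL F ^ N) s = s := by
  funext i; rw [shiftL_pow_apply]; exact hper i

lemma shift_mod (hper : ∀ i, s (i + N) = s i) (hN0 : 0 < N) (ℓ : ℕ) :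
    (shiftL F ^ ℓ) s = (shiftL F ^ (ℓ % N)) s := by
  conv_lhs => rw [← Nat.mod_add_div ℓ N]
  rw [shift_pow_add]
  congr 1
  have : ∀ q : ℕ, (shiftL F ^ (N * q)) s = s := by
    intro q
    induction q with
    | zero => rfl
    | succ q ih => rw [Nat.mul_succ, shift_pow_add, shift_N_fix hper, ih]
  exact this _

lemma shift_inj (hlp : IsLeastPeriod s N) {i j : ℕ} (hi : i < N) (hj : j < N)
    (hij : (shiftL F ^ i) s = (shiftL F ^ j) s) : i = j := by
  obtain ⟨hN0, hper, hmin⟩ := hlp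
  by_contra hne
  wlog hlt : i < j generalizing i j
  · exact this hj hi hij.symm (Ne.symm hne) (by omega)
  have key : (shiftL F ^ (N - j + i)) s = s := by
    have h1 : (shiftL F ^ (N - j)) ((shiftL F ^ i) s) = (shiftL F ^ (N - j)) ((shiftL F ^ j) s) := by
      rw [hij]
    rw [← shift_pow_add, ← shift_pow_add] at h1
    have h2 : N - j + j = N := by omega
    rw [h2, shift_N_fix hper] at h1
    exact h1
  have hper2 : ∀ x, s (x + (N - j + i)) = s x := by
    intro x
    have := congrFun key x
    rwa [shiftL_pow_apply] at this
  have := hmin (N - j + i) (by omega) hper2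
  omega

lemma seqCycle_eq_image (hlp : IsLeastPeriod s N) :
    seqCycle s = (fun ℓ => (shiftL F ^ ℓ) s) '' (Set.Iio N) := by
  obtain ⟨hN0, hper, -⟩ := hlp
  ext x
  constructor
  · rintro ⟨ℓ, rfl⟩
    exact ⟨ℓ % N, Nat.mod_lt _ hN0, (shift_mod hper hN0 ℓ).symm⟩
  · rintro ⟨ℓ, -, rfl⟩
    exact ⟨ℓ, rfl⟩

lemma seqCycle_ncard (hlp : IsLeastPeriod s N) : (seqCycle s).ncard = N := by
  rw [seqCycle_eq_image hlp, Set.ncard_image_of_injOn, ← Finset.coe_Iio, Set.ncard_coe_finset, Nat.card_Iio]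
  intro i hi j hj hij
  exact shift_inj hlp hi hj hij

lemma mem_seqCycle_self : s ∈ seqCycle s := ⟨0, rfl⟩

lemma seqCycle_eq_of_mem (hper : ∀ i, s (i + N) = s i) (hN0 : 0 < N) {s' : ℕ → F}
    (hs' : s' ∈ seqCycle s) : seqCycle s' = seqCycle s := by
  obtain ⟨ℓ, rfl⟩ := hs'
  have hback : s = (shiftL F ^ (N * (ℓ + 1) - ℓ)) ((shiftL F ^ ℓ) s) := by
    rw [← shift_pow_add]
    have h1 : N * (ℓ + 1) - ℓ + ℓ = N * (ℓ + 1) := by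
      have := Nat.le_mul_of_pos_left (ℓ + 1) hN0
      omega
    rw [h1]
    have : ∀ q : ℕ, (shiftL F ^ (N * q)) s = s := by
      intro q
      induction q with
      | zero => rfl
      | succ q ih => rw [Nat.mul_succ, shift_pow_add, shift_N_fix hper, ih]
    exact (this (ℓ + 1)).symm
  ext x
  constructor
  · rintro ⟨m, rfl⟩
    exact ⟨m + ℓ, by rw [shift_pow_add]⟩
  · rintro ⟨m, rfl⟩
    refine ⟨m + (N * (ℓ + 1) - ℓ), ?_⟩
    rw [shift_pow_add, ← hback]

end Cycles

section MinPolyChar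
variable {F : Type*} [Field F]
open scoped Classical in

lemma minpoly_pow_iff {g : Polynomial F} (hmonic : g.Monic) (hirr : Irreducible g)
    {r : ℕ} (hr1 : 1 ≤ r) (s : ℕ → F) :
    IsMinPolyOfSeq s (g ^ r) ↔ s ∈ OmegaSet (g ^ r) ∧ s ∉ OmegaSet (g ^ (r - 1)) := by
  have hg0 : g ≠ 0 := hirr.ne_zero
  constructor
  · rintro ⟨hm, hann, hdvd⟩
    refine ⟨hann, fun hmem => ?_⟩
    have h1 : g ^ r ∣ g ^ (r - 1) := hdvd _ hmem
    have := (pow_dvd_pow_iff hg0 hirr.not_isUnit).mp h1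
    omega
  · rintro ⟨hann, hnot⟩
    refine ⟨hmonic.pow _, hann, ?_⟩
    intro h' hh'
    set d := EuclideanDomain.gcd (g ^ r) h' with hd
    have hds : polyL d s = 0 := by
      rw [hd, EuclideanDomain.gcd_eq_gcd_ab, mul_comm (g ^ r : Polynomial F),
        mul_comm (h' : Polynomial F), polyL_add_apply, polyL_mul_apply, polyL_mul_apply,
        hann, hh', map_zero, map_zero, add_zero]
    have hdg : d ∣ g ^ r := EuclideanDomain.gcd_dvd_left _ _
    obtain ⟨i, hir, hassoc⟩ := (dvd_prime_pow hirr.prime r).mp hdg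
    rcases Nat.lt_or_ge i r with hilt | hige
    · exfalso
      apply hnot
      have hgi : polyL (g ^ i) s = 0 := polyL_annihilates_of_dvd hassoc.dvd hds
      exact polyL_annihilates_of_dvd (pow_dvd_pow g (by omega)) hgi
    · have hi : i = r := le_antisymm hir hige
      subst hi
      exact hassoc.symm.dvd.trans (EuclideanDomain.gcd_dvd_right _ _)

lemma cycles_count {S : Set (ℕ → F)} (hfin : S.Finite) {N : ℕ}
    (hsub : ∀ s ∈ S, seqCycle s ⊆ S)
    (hcard : ∀ s ∈ S, (seqCycle s).ncard = N)
    (heq : ∀ s ∈ S, ∀ s' ∈ seqCycle s, seqCycle s' = seqCycle s) :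
    {C : Set (ℕ → F) | ∃ s ∈ S, C = seqCycle s}.ncard * N = S.ncard := by
  classical
  set T := hfin.toFinset with hT
  have hmemT : ∀ x, x ∈ T ↔ x ∈ S := fun x => hfin.mem_toFinset
  set 𝒯 : Finset (Set (ℕ → F)) := T.image seqCycle with h𝒯
  have hmap : ∀ x ∈ T, seqCycle x ∈ 𝒯 := fun x hx => Finset.mem_image_of_mem _ hx
  have hsum := Finset.card_eq_sum_card_fiberwise hmap
  have hfib : ∀ C ∈ 𝒯, (T.filter (fun x => seqCycle x = C)).card = N := by
    intro C hC
    obtain ⟨s₀, hs₀, rfl⟩ := Finset.mem_image.mp hC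
    have hs₀S : s₀ ∈ S := (hmemT _).mp hs₀
    have hset : (↑(T.filter (fun x => seqCycle x = seqCycle s₀)) : Set (ℕ → F))
        = seqCycle s₀ := by
      ext x
      simp only [Finset.coe_filter, Set.mem_setOf_eq, hmemT]
      constructor
      · rintro ⟨hxS, hxc⟩
        rw [← hxc]; exact mem_seqCycle_self
      · intro hx
        exact ⟨hsub s₀ hs₀S hx, heq s₀ hs₀S x hx⟩
    have hc := hcard s₀ hs₀S
    rw [← hset, Set.ncard_coe_finset] at hc
    exact hc
  rw [Finset.sum_congr rfl hfib, Finset.sum_const, smul_eq_mul] at hsum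
  have hCset : {C : Set (ℕ → F) | ∃ s ∈ S, C = seqCycle s} = ↑𝒯 := by
    ext C
    simp only [Set.mem_setOf_eq, h𝒯, Finset.coe_image, Set.mem_image, Finset.mem_coe, hmemT]
    constructor
    · rintro ⟨s, hs, rfl⟩; exact ⟨s, hs, rfl⟩
    · rintro ⟨s, hs, rfl⟩; exact ⟨s, hs, rfl⟩
  have hSncard : S.ncard = T.card := by
    rw [← Set.ncard_coe_finset T, hT, hfin.coe_toFinset]
  rw [hCset, Set.ncard_coe_finset, hSncard, hsum]

end MinPolyChar


/-- the sequences in `Ω(g^b)` with minimal polynomial exactly `g^r`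
all have least period `e·p^c` (`c` least with `p^c ≥ r`); there are
`q^{nr} − q^{n(r−1)}` of them; and they split into exactly
`(q^{nr} − q^{n(r−1)})/(e·p^c) = t·q^{n(r−1)}/p^c` cycles, each of size `e·p^c`. -/
theorem stmt5 {F : Type*} [Field F] [Fintype F] (p : ℕ) (hp : p.Prime) [CharP F p]
    (g : Polynomial F) (hmonic : g.Monic) (hirr : Irreducible g) (hg0 : g.coeff 0 ≠ 0)
    (n : ℕ) (hdeg : g.natDegree = n)
    (e : ℕ) (he : IsOrderOf g e)
    (t : ℕ) (ht : t = (Fintype.card F ^ n - 1) / e)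
    (b r : ℕ) (hr1 : 1 ≤ r) (hrb : r ≤ b)
    (c : ℕ) (hc1 : r ≤ p ^ c) (hc2 : ∀ c' : ℕ, r ≤ p ^ c' → c ≤ c')
    (S : Set (ℕ → F))
    (hS : S = {s | s ∈ OmegaSet (g ^ b) ∧ IsMinPolyOfSeq s (g ^ r)}) :
    (∀ s ∈ S, IsLeastPeriod s (e * p ^ c)) ∧
    S.ncard = Fintype.card F ^ (n * r) - Fintype.card F ^ (n * (r - 1)) ∧
    (∀ s ∈ S, seqCycle s ⊆ S ∧ (seqCycle s).ncard = e * p ^ c) ∧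
    {C : Set (ℕ → F) | ∃ s ∈ S, C = seqCycle s}.ncard
      = (Fintype.card F ^ (n * r) - Fintype.card F ^ (n * (r - 1))) / (e * p ^ c) ∧
    (Fintype.card F ^ (n * r) - Fintype.card F ^ (n * (r - 1))) / (e * p ^ c)
      = t * Fintype.card F ^ (n * (r - 1)) / p ^ c := by
  subst hdeg
  obtain ⟨r', rfl⟩ : ∃ r', r = r' + 1 := ⟨r - 1, by omega⟩
  have hr'1 : r' + 1 - 1 = r' := by omega
  rw [hr'1] at *
  set q := Fintype.card F with hq
  set n := g.natDegree with hn
  have hn1 : 1 ≤ n := hirr.natDegree_pos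
  have hord : IsOrderOf (g ^ (r' + 1)) (e * p ^ c) := order_pow hp hirr he hr1 hc1 hc2
  have hN0 : 0 < e * p ^ c := hord.1
  -- minpoly of elements of S
  have hSmp : ∀ s ∈ S, IsMinPolyOfSeq s (g ^ (r' + 1)) := by
    rw [hS]; exact fun s hs => hs.2
  -- least period
  have hlp : ∀ s ∈ S, IsLeastPeriod s (e * p ^ c) := fun s hs =>
    least_period_of_minpoly hord (hSmp s hs)
  -- S as a set difference
  have hSdesc : S = OmegaSet (g ^ (r' + 1)) \ OmegaSet (g ^ r') := by
    rw [hS]; ext s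
    simp only [Set.mem_setOf_eq, Set.mem_diff]
    constructor
    · rintro ⟨hb2, hmp⟩
      have := (minpoly_pow_iff hmonic hirr hr1 s).mp hmp
      rwa [hr'1] at this
    · intro hd
      have hd' : s ∈ OmegaSet (g ^ (r' + 1)) ∧ s ∉ OmegaSet (g ^ (r' + 1 - 1)) := by
        rwa [hr'1]
      have hmp := (minpoly_pow_iff hmonic hirr hr1 s).mpr hd'
      exact ⟨polyL_annihilates_of_dvd (pow_dvd_pow g hrb) hd.1, hmp⟩
  have hΩsub : OmegaSet (g ^ r') ⊆ OmegaSet (g ^ (r' + 1)) := fun s hs =>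
    polyL_annihilates_of_dvd (pow_dvd_pow g (by omega)) hs
  -- cardinality of S
  have hScard : S.ncard = q ^ (n * (r' + 1)) - q ^ (n * r') := by
    rw [hSdesc, Set.ncard_diff hΩsub ((omega_finite (g ^ r') (hmonic.pow _))),
      omega_ncard _ (hmonic.pow _), omega_ncard _ (hmonic.pow _),
      Polynomial.natDegree_pow, Polynomial.natDegree_pow, mul_comm (r' + 1) n, mul_comm r' n]
  have hSfin : S.Finite := by
    rw [hSdesc]
    exact (omega_finite (g ^ (r' + 1)) (hmonic.pow _)).diff
  -- cycles
  have hcyc_sub : ∀ s ∈ S, seqCycle s ⊆ S := by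
    intro s hs s' hs'
    obtain ⟨ℓ, rfl⟩ := hs'
    have hmp := shift_minpoly hirr hg0 (hSmp s hs) ℓ
    rw [hS]
    exact ⟨polyL_annihilates_of_dvd (pow_dvd_pow g hrb) hmp.2.1, hmp⟩
  have hcyc_card : ∀ s ∈ S, (seqCycle s).ncard = e * p ^ c := fun s hs =>
    seqCycle_ncard (hlp s hs)
  have hcyc_eq : ∀ s ∈ S, ∀ s' ∈ seqCycle s, seqCycle s' = seqCycle s := fun s hs s' h' =>
    seqCycle_eq_of_mem (hlp s hs).2.1 hN0 h'
  have hmul := cycles_count hSfin hcyc_sub hcyc_card hcyc_eq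
  rw [hScard] at hmul
  have hcycles : {C : Set (ℕ → F) | ∃ s ∈ S, C = seqCycle s}.ncard
      = (q ^ (n * (r' + 1)) - q ^ (n * r')) / (e * p ^ c) :=
    (Nat.div_eq_of_eq_mul_left hN0 hmul.symm).symm
  -- the final arithmetic identity
  have hedvd : e ∣ q ^ n - 1 := order_dvd_card_sub_one hmonic hirr hg0 he
  have hD : q ^ n - 1 = e * t := by rw [ht]; exact (Nat.mul_div_cancel' hedvd).symm
  have hq2 : 2 ≤ q := Fintype.one_lt_card
  have hcr : c ≤ n * r' ∨ r' = 0 := by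
    rcases Nat.eq_zero_or_pos r' with h0 | h0
    · right; exact h0
    · left
      rcases Nat.eq_zero_or_pos c with hc0 | hc0
      · omega
      have h1 : ¬ (r' + 1 ≤ p ^ (c - 1)) := fun hle => by have := hc2 _ hle; omega
      push_neg at h1
      have h2 : c - 1 < 2 ^ (c - 1) := Nat.lt_two_pow_self
      have h3 : 2 ^ (c - 1) ≤ p ^ (c - 1) := Nat.pow_le_pow_left hp.two_le _
      have hcr' : c ≤ r' := by omega
      calc c ≤ r' := hcr'
        _ ≤ n * r' := Nat.le_mul_of_pos_left r' (by omega)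
  have harith : (q ^ (n * (r' + 1)) - q ^ (n * r')) / (e * p ^ c)
      = t * q ^ (n * r') / p ^ c := by
    have hnum : q ^ (n * (r' + 1)) - q ^ (n * r') = q ^ (n * r') * (q ^ n - 1) := by
      have h1 : n * (r' + 1) = n * r' + n := by ring
      rw [h1, pow_add, Nat.mul_sub, mul_one]
    rcases hcr with hcle | hr'0
    · -- p ^ c ∣ q ^ (n * r')
      obtain ⟨m, hpm, hqm⟩ := FiniteField.card F p
      have hpc_dvd : p ^ c ∣ q ^ (n * r') := by
        rw [hq, hqm, ← pow_mul]
        exact pow_dvd_pow p (le_trans hcle (Nat.le_mul_of_pos_left _ m.2))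
      obtain ⟨A', hA'⟩ := hpc_dvd
      rw [hnum, hA', hD]
      have h2 : p ^ c * A' * (e * t) = e * p ^ c * (t * A') := by ring
      have h3 : t * (p ^ c * A') = p ^ c * (t * A') := by ring
      rw [h2, h3, Nat.mul_div_cancel_left _ hN0, Nat.mul_div_cancel_left _ (pow_pos hp.pos c)]
    · -- r' = 0, hence c = 0
      subst hr'0
      have hc0 : c = 0 := by have := hc2 0 (by simpa using hr1); omega
      subst hc0
      simpa using ht.symm
  exact ⟨hlp, hScard, fun s hs => ⟨hcyc_sub s hs, hcyc_card s hs⟩, by rw [hcycles], by rw [harith]⟩
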